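/- arXiv:1806.06224 — 3 statements merged into one kernel-verified Lean document; each statement's English description precedes it below -/
import Mathlib

section
/- If $R(t)$ solves $\dot R = R\hat\Omega(t) - k R(R^TR - I)$ with $k>0$ and $R(0)\in SO(3)$, then $R(t)\in SO(3)$ for all $t$ in the domain of the solution; i.e., $SO(3)$ is invariant under the extended dynamics. -/
open Matrix

/-- The hat map `ℝ³ → ℝ^{3×3}`. -/
def hat (Ω : Fin 3 → ℝ) : Matrix (Fin 3) (Fin 3) ℝ :=
  !![0, -Ω 2, Ω 1; Ω 2, 0, -Ω 0; -Ω 1, Ω 0, 0]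

open Set

/-- View a 3×3 matrix as an element of the pi type `Fin 3 → Fin 3 → ℝ`
(so that the sup-norm and its calculus apply). -/
def toPi (M : Matrix (Fin 3) (Fin 3) ℝ) : Fin 3 → Fin 3 → ℝ := M

lemma toPi_entry_le (M : Matrix (Fin 3) (Fin 3) ℝ) (i j : Fin 3) : |toPi M i j| ≤ ‖toPi M‖ :=
  le_trans (by simpa using norm_le_pi_norm (toPi M i) j) (norm_le_pi_norm (toPi M) i)

lemma toPi_norm_le (M : Matrix (Fin 3) (Fin 3) ℝ) {C : ℝ} (hC : 0 ≤ C)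
    (h : ∀ i j, |toPi M i j| ≤ C) : ‖toPi M‖ ≤ C := by
  refine (pi_norm_le_iff_of_nonneg hC).2 fun i => (pi_norm_le_iff_of_nonneg hC).2 fun j => ?_
  simpa [Real.norm_eq_abs] using h i j

lemma toPi_mul_le (M N : Matrix (Fin 3) (Fin 3) ℝ) :
    ‖toPi (M * N)‖ ≤ 3 * ‖toPi M‖ * ‖toPi N‖ := by
  refine toPi_norm_le _ (by positivity) fun i j => ?_
  show |(M * N) i j| ≤ _
  rw [Matrix.mul_apply, Fin.sum_univ_three]
  calc |M i 0 * N 0 j + M i 1 * N 1 j + M i 2 * N 2 j|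
      ≤ |M i 0 * N 0 j| + |M i 1 * N 1 j| + |M i 2 * N 2 j| := abs_add_three _ _ _
    _ ≤ ‖toPi M‖ * ‖toPi N‖ + ‖toPi M‖ * ‖toPi N‖ + ‖toPi M‖ * ‖toPi N‖ := by
        refine add_le_add (add_le_add ?_ ?_) ?_ <;>
        · rw [abs_mul]
          exact mul_le_mul (toPi_entry_le _ _ _) (toPi_entry_le _ _ _) (abs_nonneg _)
            (norm_nonneg _)
    _ = 3 * ‖toPi M‖ * ‖toPi N‖ := by ring

lemma hat_norm_le (ω : Fin 3 → ℝ) : ‖toPi (hat ω)‖ ≤ ‖ω‖ := by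
  have h2 : ∀ m : Fin 3, |ω m| ≤ ‖ω‖ := fun m => by
    simpa [Real.norm_eq_abs] using norm_le_pi_norm ω m
  refine toPi_norm_le _ (norm_nonneg _) fun i j => ?_
  show |hat ω i j| ≤ _
  fin_cases i <;> fin_cases j <;>
    simp [hat] <;>
    first
      | exact norm_nonneg ω
      | simpa [abs_neg] using h2 _

set_option maxHeartbeats 4000000 in
/-- The key algebraic identity: entrywise derivative of `X = RᵀR - 1` along the flow
equals `X·Â - Â·X - 2k(X·X) - 2kX`. -/
lemma key (k : ℝ) (ω : Fin 3 → ℝ) (R : Matrix (Fin 3) (Fin 3) ℝ) (i j : Fin 3) :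
    (∑ l, ((R * hat ω - k • (R * (Rᵀ * R - 1))) l i * R l j
      + R l i * (R * hat ω - k • (R * (Rᵀ * R - 1))) l j))
    = ((Rᵀ * R - 1) * hat ω - hat ω * (Rᵀ * R - 1)
        - (2*k) • ((Rᵀ * R - 1) * (Rᵀ * R - 1)) - (2*k) • (Rᵀ * R - 1)) i j := by
  fin_cases i <;> fin_cases j <;>
    simp [hat, Matrix.mul_apply, Fin.sum_univ_three, Matrix.sub_apply, Matrix.smul_apply,
      Matrix.one_apply, Matrix.transpose_apply, smul_eq_mul, Matrix.vecMul, dotProduct,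
      Matrix.vecHead, Matrix.vecTail] <;> ring_nf

/-- `SO(3)` is invariant under the extended dynamics
`Ṙ = R hat(Ω(t)) - k R (RᵀR - I)`: if the solution starts in `SO(3)` it stays there. -/
theorem stmt_9 (k : ℝ) (hk : 0 < k) (Ω : ℝ → Fin 3 → ℝ) (hΩ : Continuous Ω)
    (R : ℝ → Matrix (Fin 3) (Fin 3) ℝ)
    (hR : ∀ t, 0 ≤ t → ∀ i j, HasDerivAt (fun s => R s i j)
      ((R t * hat (Ω t) - k • (R t * ((R t)ᵀ * R t - 1))) i j) t)
    (h0 : (R 0)ᵀ * R 0 = 1 ∧ (R 0).det = 1) :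
    ∀ t, 0 ≤ t → (R t)ᵀ * R t = 1 ∧ (R t).det = 1 := by
  have hRc : ∀ i j, ContinuousOn (fun s => R s i j) (Ici (0:ℝ)) :=
    fun i j s hs => ((hR s hs i j).continuousAt).continuousWithinAt
  set X : ℝ → Fin 3 → Fin 3 → ℝ := fun t => toPi ((R t)ᵀ * R t - 1) with hXdef
  set D : ℝ → Fin 3 → Fin 3 → ℝ := fun t =>
    toPi (((R t)ᵀ * R t - 1) * hat (Ω t) - hat (Ω t) * ((R t)ᵀ * R t - 1)
      - (2*k) • (((R t)ᵀ * R t - 1) * ((R t)ᵀ * R t - 1)) - (2*k) • ((R t)ᵀ * R t - 1)) with hDdef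
  have hfun : ∀ i j, (fun s => X s i j)
      = fun s => (∑ l, R s l i * R s l j) - (1 : Matrix (Fin 3) (Fin 3) ℝ) i j := by
    intro i j; funext s
    show ((R s)ᵀ * R s - 1) i j = _
    rw [Matrix.sub_apply, Matrix.mul_apply]
    simp [Matrix.transpose_apply]
  -- derivative of X
  have hXd : ∀ t, 0 ≤ t → HasDerivAt X (D t) t := by
    intro t ht
    refine hasDerivAt_pi.2 fun i => hasDerivAt_pi.2 fun j => ?_
    have hsum : HasDerivAt (fun s => ∑ l : Fin 3, R s l i * R s l j)
        (∑ l : Fin 3, ((R t * hat (Ω t) - k • (R t * ((R t)ᵀ * R t - 1))) l i * R t l j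
          + R t l i * (R t * hat (Ω t) - k • (R t * ((R t)ᵀ * R t - 1))) l j)) t :=
      HasDerivAt.fun_sum fun l _ => (hR t ht l i).mul (hR t ht l j)
    have h2 := hsum.sub_const ((1 : Matrix (Fin 3) (Fin 3) ℝ) i j)
    rw [← hfun i j] at h2
    have h3 := key k (Ω t) (R t) i j
    rw [h3] at h2
    exact h2
  -- continuity of X
  have hXc : ContinuousOn X (Ici (0:ℝ)) := by
    refine continuousOn_pi.2 fun i => continuousOn_pi.2 fun j => ?_
    rw [hfun i j]
    exact (continuousOn_finset_sum _ fun l _ => (hRc l i).mul (hRc l j)).sub continuousOn_const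
  -- orthogonality via Grönwall
  have hortho : ∀ T, 0 ≤ T → (R T)ᵀ * R T = 1 := by
    intro T hT
    have c2 : ContinuousOn (fun s => 6 * ‖Ω s‖ + 6 * k * ‖X s‖ + 2 * k) (Icc 0 T) :=
      ((continuousOn_const.mul hΩ.norm.continuousOn).add
        (continuousOn_const.mul ((hXc.mono Icc_subset_Ici_self).norm))).add continuousOn_const
    obtain ⟨u, hu, hKmax⟩ :=
      isCompact_Icc.exists_isMaxOn ⟨0, le_refl 0, hT⟩ c2
    set K : ℝ := 6 * ‖Ω u‖ + 6 * k * ‖X u‖ + 2 * k with hKdef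
    have hX0 : ‖X 0‖ ≤ 0 := by
      have : X 0 = 0 := by
        show toPi ((R 0)ᵀ * R 0 - 1) = 0
        rw [h0.1, sub_self]; rfl
      rw [this, norm_zero]
    have hbound : ∀ s ∈ Ico (0:ℝ) T, ‖D s‖ ≤ K * ‖X s‖ + 0 := by
      intro s hs
      have hgs := hKmax ⟨hs.1, le_of_lt hs.2⟩
      set M : Matrix (Fin 3) (Fin 3) ℝ := (R s)ᵀ * R s - 1 with hM
      have e1 : ‖toPi (M * hat (Ω s))‖ ≤ 3 * ‖X s‖ * ‖Ω s‖ :=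
        (toPi_mul_le _ _).trans (by
          have := hat_norm_le (Ω s)
          have h0' : (0:ℝ) ≤ 3 * ‖X s‖ := by positivity
          calc 3 * ‖toPi M‖ * ‖toPi (hat (Ω s))‖ = 3 * ‖X s‖ * ‖toPi (hat (Ω s))‖ := rfl
            _ ≤ 3 * ‖X s‖ * ‖Ω s‖ := mul_le_mul_of_nonneg_left this h0')
      have e2 : ‖toPi (hat (Ω s) * M)‖ ≤ 3 * ‖Ω s‖ * ‖X s‖ :=
        (toPi_mul_le _ _).trans (by
          have := hat_norm_le (Ω s)
          have : 3 * ‖toPi (hat (Ω s))‖ ≤ 3 * ‖Ω s‖ := by linarith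
          exact mul_le_mul_of_nonneg_right (by exact this) (norm_nonneg _))
      have e3 : ‖toPi (M * M)‖ ≤ 3 * ‖X s‖ * ‖X s‖ := toPi_mul_le _ _
      have hDle : ‖D s‖ ≤ ‖toPi (M * hat (Ω s))‖ + ‖toPi (hat (Ω s) * M)‖
          + (2*k) * ‖toPi (M * M)‖ + (2*k) * ‖toPi M‖ := by
        have hsplit : D s = toPi (M * hat (Ω s)) - toPi (hat (Ω s) * M)
            - (2*k) • toPi (M * M) - (2*k) • toPi M := rfl
        rw [hsplit]
        calc ‖toPi (M * hat (Ω s)) - toPi (hat (Ω s) * M)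
              - (2*k) • toPi (M * M) - (2*k) • toPi M‖
            ≤ ‖toPi (M * hat (Ω s)) - toPi (hat (Ω s) * M) - (2*k) • toPi (M * M)‖
              + ‖(2*k) • toPi M‖ := norm_sub_le _ _
          _ ≤ ‖toPi (M * hat (Ω s)) - toPi (hat (Ω s) * M)‖ + ‖(2*k) • toPi (M * M)‖
              + ‖(2*k) • toPi M‖ := by gcongr; exact norm_sub_le _ _
          _ ≤ ‖toPi (M * hat (Ω s))‖ + ‖toPi (hat (Ω s) * M)‖ + ‖(2*k) • toPi (M * M)‖
              + ‖(2*k) • toPi M‖ := by gcongr; exact norm_sub_le _ _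
          _ = ‖toPi (M * hat (Ω s))‖ + ‖toPi (hat (Ω s) * M)‖ + (2*k) * ‖toPi (M * M)‖
              + (2*k) * ‖toPi M‖ := by
                rw [norm_smul, norm_smul, Real.norm_eq_abs, abs_of_pos (by linarith)]
      have hXsn : (0:ℝ) ≤ ‖X s‖ := norm_nonneg _
      have hXM : ‖toPi M‖ = ‖X s‖ := rfl
      rw [hXM] at hDle
      have hgs' : 6 * ‖Ω s‖ + 6 * k * ‖X s‖ + 2 * k ≤ K := hgs
      have h2k : (0:ℝ) ≤ 2 * k := by linarith
      nlinarith [mul_le_mul_of_nonneg_right hgs' hXsn, mul_le_mul_of_nonneg_left e3 h2k]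
    have hG := norm_le_gronwallBound_of_norm_deriv_right_le
      (hXc.mono Icc_subset_Ici_self)
      (fun x hx => (hXd x hx.1).hasDerivWithinAt) hX0 hbound T ⟨hT, le_refl T⟩
    rw [gronwallBound_ε0_δ0] at hG
    have hXT : X T = 0 := norm_le_zero_iff.1 hG
    have : (R T)ᵀ * R T - 1 = 0 := hXT
    exact sub_eq_zero.1 this
  intro t ht
  refine ⟨hortho t ht, ?_⟩
  have hd2 : ∀ s, 0 ≤ s → (R s).det ^ 2 = 1 := by
    intro s hs
    have h := congrArg Matrix.det (hortho s hs)
    rwa [Matrix.det_mul, Matrix.det_transpose, Matrix.det_one, ← sq] at h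
  have cE : ∀ i j, ContinuousOn (fun s => R s i j) (Icc (0:ℝ) t) :=
    fun i j => (hRc i j).mono Icc_subset_Ici_self
  have hdc : ContinuousOn (fun s => (R s).det) (Icc (0:ℝ) t) := by
    have hform : (fun s => (R s).det) = fun s =>
        R s 0 0 * R s 1 1 * R s 2 2 - R s 0 0 * R s 1 2 * R s 2 1
        - R s 0 1 * R s 1 0 * R s 2 2 + R s 0 1 * R s 1 2 * R s 2 0
        + R s 0 2 * R s 1 0 * R s 2 1 - R s 0 2 * R s 1 1 * R s 2 0 := by
      funext s; exact Matrix.det_fin_three (R s)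
    rw [hform]
    exact (((((((cE 0 0).mul (cE 1 1)).mul (cE 2 2)).sub
      (((cE 0 0).mul (cE 1 2)).mul (cE 2 1))).sub
      (((cE 0 1).mul (cE 1 0)).mul (cE 2 2))).add
      (((cE 0 1).mul (cE 1 2)).mul (cE 2 0))).add
      (((cE 0 2).mul (cE 1 0)).mul (cE 2 1))).sub
      (((cE 0 2).mul (cE 1 1)).mul (cE 2 0))
  rcases mul_eq_zero.1 (show ((R t).det - 1) * ((R t).det + 1) = 0 by
      linear_combination hd2 t ht) with h1 | h2
  · linarith
  · exfalso
    have hneg : (R t).det = -1 := by linarith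
    have h01 : (0:ℝ) ∈ Icc ((fun s => (R s).det) t) ((fun s => (R s).det) 0) := by
      simp only [hneg, h0.2]
      constructor <;> norm_num
    obtain ⟨s, hsmem, hs0⟩ := intermediate_value_Icc' ht hdc h01
    have h2 := hd2 s hsmem.1
    simp only [show (R s).det = 0 from hs0] at h2
    norm_num at h2
end

section
/- Along any solution $R(t)$ of $\dot R = R\hat\Omega(t) - k R(R^TR-I)$, the quantity $E(t)=\|R(t)^TR(t)-I\|^2$ satisfies $\dot E = -2k\,\operatorname{tr}\big((R^TR-I)(R^TR(R^TR-I)+(R^TR-I)R^TR)\big)$; in particular, $\dot E \le 0$ whenever $R^TR \ge \tfrac{1}{2} I$ (in the positive-semidefinite order). -/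
open Matrix

lemma hat_transpose (v : Fin 3 → ℝ) : (hat v)ᵀ = -(hat v) := by
  ext i j
  fin_cases i <;> fin_cases j <;> simp [hat]

lemma trace_nonneg_of_psd {n : Type*} [Fintype n] [DecidableEq n]
    {M : Matrix n n ℝ} (h : M.PosSemidef) : 0 ≤ M.trace := by
  have hd : ∀ i, 0 ≤ M i i := by
    intro i
    have := h.dotProduct_mulVec_nonneg (Pi.single i 1)
    simpa [dotProduct, Matrix.mulVec, Pi.single_apply, Finset.sum_ite_eq,
      mul_comm] using this
  exact Finset.sum_nonneg fun i _ => hd i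

lemma alg1 (k : ℝ) (Rt H : Matrix (Fin 3) (Fin 3) ℝ) (hH : Hᵀ = -H) :
    (Rt * H - k • (Rt * (Rtᵀ * Rt - 1)))ᵀ * Rt + Rtᵀ * (Rt * H - k • (Rt * (Rtᵀ * Rt - 1)))
    = Rtᵀ * Rt * H - H * (Rtᵀ * Rt)
      - k • ((Rtᵀ * Rt - 1) * (Rtᵀ * Rt) + (Rtᵀ * Rt) * (Rtᵀ * Rt - 1)) := by
  have hMsymm : (Rtᵀ * Rt - 1)ᵀ = Rtᵀ * Rt - 1 := by
    rw [Matrix.transpose_sub, Matrix.transpose_mul, Matrix.transpose_transpose,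
      Matrix.transpose_one]
  rw [Matrix.transpose_sub, Matrix.transpose_smul, Matrix.transpose_mul,
    Matrix.transpose_mul, hMsymm, hH]
  rw [Matrix.sub_mul, Matrix.smul_mul, Matrix.mul_sub, Matrix.mul_smul]
  have a1 : Rtᵀ * (Rt * H) = Rtᵀ * Rt * H := (Matrix.mul_assoc _ _ _).symm
  have a2 : Rtᵀ * (Rt * (Rtᵀ * Rt - 1)) = (Rtᵀ * Rt) * (Rtᵀ * Rt - 1) :=
    (Matrix.mul_assoc _ _ _).symm
  have a3 : (Rtᵀ * Rt - 1) * Rtᵀ * Rt = (Rtᵀ * Rt - 1) * (Rtᵀ * Rt) :=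
    Matrix.mul_assoc _ _ _
  have a4 : -H * Rtᵀ * Rt = -(H * (Rtᵀ * Rt)) := by
    rw [Matrix.neg_mul, Matrix.neg_mul, Matrix.mul_assoc]
  rw [a1, a2, a3, a4, smul_add]
  abel

lemma alg2 (k : ℝ) (P H : Matrix (Fin 3) (Fin 3) ℝ) :
    2 * Matrix.trace ((P - 1) * (P * H - H * P - k • ((P - 1) * P + P * (P - 1))))
    = -(2 * k) * Matrix.trace ((P - 1) * (P * (P - 1) + (P - 1) * P)) := by
  set M := P - 1 with hM
  have hcomm : M * P = P * M := by
    rw [hM]; simp [Matrix.sub_mul, Matrix.mul_sub]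
  have e1 : Matrix.trace (M * (H * P)) = Matrix.trace (M * (P * H)) := by
    calc Matrix.trace (M * (H * P)) = Matrix.trace (M * H * P) := by rw [Matrix.mul_assoc]
      _ = Matrix.trace (P * (M * H)) := Matrix.trace_mul_comm _ _
      _ = Matrix.trace (P * M * H) := by rw [Matrix.mul_assoc]
      _ = Matrix.trace (M * P * H) := by rw [hcomm]
      _ = Matrix.trace (M * (P * H)) := by rw [Matrix.mul_assoc]
  rw [Matrix.mul_sub, Matrix.mul_sub, Matrix.mul_smul, Matrix.trace_sub,
    Matrix.trace_sub, Matrix.trace_smul, e1, Matrix.mul_add, Matrix.mul_add,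
    Matrix.trace_add, Matrix.trace_add]
  simp only [smul_eq_mul]
  ring

/-- Along any solution of `Ṙ = R hat(Ω(t)) - k R (RᵀR - I)`, the quantity
`E(t) = ‖RᵀR - I‖²` (squared Frobenius norm) has derivative
`Ė = -2k tr((RᵀR-I)(RᵀR(RᵀR-I) + (RᵀR-I)RᵀR))`; in particular `Ė ≤ 0` whenever
`RᵀR ≥ (1/2)I` in the positive-semidefinite order. -/
theorem stmt_10 (k : ℝ) (hk : 0 < k) (Ω : ℝ → Fin 3 → ℝ) (hΩ : Continuous Ω)
    (R : ℝ → Matrix (Fin 3) (Fin 3) ℝ)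
    (hR : ∀ t, ∀ i j, HasDerivAt (fun s => R s i j)
      ((R t * hat (Ω t) - k • (R t * ((R t)ᵀ * R t - 1))) i j) t) :
    ∀ t,
      HasDerivAt (fun s => Matrix.trace (((R s)ᵀ * R s - 1)ᵀ * ((R s)ᵀ * R s - 1)))
        (-(2 * k) * Matrix.trace (((R t)ᵀ * R t - 1) *
          ((R t)ᵀ * R t * ((R t)ᵀ * R t - 1) + ((R t)ᵀ * R t - 1) * ((R t)ᵀ * R t)))) t ∧
      (Matrix.PosSemidef ((R t)ᵀ * R t - (1 / 2 : ℝ) • 1) →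
        -(2 * k) * Matrix.trace (((R t)ᵀ * R t - 1) *
          ((R t)ᵀ * R t * ((R t)ᵀ * R t - 1) + ((R t)ᵀ * R t - 1) * ((R t)ᵀ * R t))) ≤ 0) := by
  intro t
  have hMsymm : ((R t)ᵀ * R t - 1)ᵀ = (R t)ᵀ * R t - 1 := by
    rw [Matrix.transpose_sub, Matrix.transpose_mul, Matrix.transpose_transpose,
      Matrix.transpose_one]
  have hcomm : ((R t)ᵀ * R t - 1) * ((R t)ᵀ * R t) = ((R t)ᵀ * R t) * ((R t)ᵀ * R t - 1) := by
    simp [Matrix.sub_mul, Matrix.mul_sub]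
  -- the derivative matrix of M(s)
  set Rd : Matrix (Fin 3) (Fin 3) ℝ :=
    R t * hat (Ω t) - k • (R t * ((R t)ᵀ * R t - 1)) with hRddef
  set D : Matrix (Fin 3) (Fin 3) ℝ := Rdᵀ * R t + (R t)ᵀ * Rd with hDdef
  set M : Matrix (Fin 3) (Fin 3) ℝ := (R t)ᵀ * R t - 1 with hMdef
  -- entrywise derivative of M(s)
  have hA : ∀ i j, HasDerivAt (fun s => ((R s)ᵀ * R s - 1) i j) (D i j) t := by
    intro i j
    have h2 : HasDerivAt (fun s => ∑ l, R s l i * R s l j)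
        (∑ l, (Rd l i * R t l j + R t l i * Rd l j)) t :=
      HasDerivAt.fun_sum fun l _ => (hR t l i).mul (hR t l j)
    have h3 := h2.sub_const ((1 : Matrix (Fin 3) (Fin 3) ℝ) i j)
    have hfun : (fun s => ((R s)ᵀ * R s - 1) i j)
        = fun s => (∑ l, R s l i * R s l j) - (1 : Matrix (Fin 3) (Fin 3) ℝ) i j := by
      funext s
      simp [Matrix.sub_apply, Matrix.mul_apply, Matrix.transpose_apply]
    have hval : D i j = ∑ l, (Rd l i * R t l j + R t l i * Rd l j) := by
      rw [hDdef]
      simp [Matrix.add_apply, Matrix.mul_apply, Matrix.transpose_apply,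
        Finset.sum_add_distrib]
    rw [hfun, hval]
    exact h3
  -- rewrite the trace as a double sum
  have htrace : (fun s => Matrix.trace (((R s)ᵀ * R s - 1)ᵀ * ((R s)ᵀ * R s - 1)))
      = fun s => ∑ j : Fin 3, ∑ i : Fin 3,
          ((R s)ᵀ * R s - 1) i j * ((R s)ᵀ * R s - 1) i j := by
    funext s
    simp only [Matrix.trace, Matrix.diag, Matrix.mul_apply, Matrix.transpose_apply]
  have hderiv : HasDerivAt (fun s => ∑ j : Fin 3, ∑ i : Fin 3,
      ((R s)ᵀ * R s - 1) i j * ((R s)ᵀ * R s - 1) i j)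
      (∑ j : Fin 3, ∑ i : Fin 3, (D i j * M i j + M i j * D i j)) t := by
    refine HasDerivAt.fun_sum fun j _ => HasDerivAt.fun_sum fun i _ => ?_
    have := (hA i j).mul (hA i j)
    exact this
  have hval2 : (∑ j : Fin 3, ∑ i : Fin 3, (D i j * M i j + M i j * D i j))
      = 2 * Matrix.trace (Mᵀ * D) := by
    simp only [Matrix.trace, Matrix.diag, Matrix.mul_apply, Matrix.transpose_apply,
      Finset.mul_sum]
    refine Finset.sum_congr rfl fun j _ => Finset.sum_congr rfl fun i _ => ?_
    ring
  have hDD : D = ((R t)ᵀ * R t) * hat (Ω t) - hat (Ω t) * ((R t)ᵀ * R t)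
      - k • (((R t)ᵀ * R t - 1) * ((R t)ᵀ * R t)
        + ((R t)ᵀ * R t) * ((R t)ᵀ * R t - 1)) := by
    rw [hDdef, hRddef]
    exact alg1 k (R t) (hat (Ω t)) (hat_transpose (Ω t))
  have halg : 2 * Matrix.trace (Mᵀ * D)
      = -(2 * k) * Matrix.trace (((R t)ᵀ * R t - 1) *
          ((R t)ᵀ * R t * ((R t)ᵀ * R t - 1) + ((R t)ᵀ * R t - 1) * ((R t)ᵀ * R t))) := by
    rw [hMdef, hMsymm, hDD]
    exact alg2 k ((R t)ᵀ * R t) (hat (Ω t))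
  constructor
  · rw [htrace, ← halg, ← hval2]
    exact hderiv
  · intro hpsd
    have hMH : Mᴴ = M := by
      rw [Matrix.conjTranspose]
      exact (Matrix.conjTranspose_eq_transpose_of_trivial M).trans hMsymm
    set P : Matrix (Fin 3) (Fin 3) ℝ := (R t)ᵀ * R t with hP
    set Q : Matrix (Fin 3) (Fin 3) ℝ := P - (1 / 2 : ℝ) • 1 with hQdef
    have hPQ : P = Q + (1 / 2 : ℝ) • 1 := by rw [hQdef]; abel
    have htr2 : Matrix.trace (M * (P * M + M * P)) = 2 * Matrix.trace (M * P * M) := by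
      rw [Matrix.mul_add, Matrix.trace_add]
      have e2 : Matrix.trace (M * (M * P)) = Matrix.trace (M * P * M) :=
        Matrix.trace_mul_comm M (M * P)
      rw [e2, ← Matrix.mul_assoc]
      ring
    have h1 : (0:ℝ) ≤ Matrix.trace (M * Q * M) := by
      have hps : (M * Q * M).PosSemidef := by
        have := hpsd.mul_mul_conjTranspose_same M
        rwa [hMH] at this
      exact trace_nonneg_of_psd hps
    have h2 : (0:ℝ) ≤ Matrix.trace (M * M) := by
      have hps : (M * M).PosSemidef := by
        have := Matrix.posSemidef_conjTranspose_mul_self M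
        rwa [hMH] at this
      exact trace_nonneg_of_psd hps
    have hsplit : Matrix.trace (M * P * M)
        = Matrix.trace (M * Q * M) + (1 / 2 : ℝ) * Matrix.trace (M * M) := by
      rw [hPQ, Matrix.mul_add, Matrix.add_mul, Matrix.trace_add, Matrix.mul_smul,
        Matrix.smul_mul, Matrix.trace_smul]
      simp [smul_eq_mul]
    have hgoal : -(2 * k) * Matrix.trace (((R t)ᵀ * R t - 1) *
        ((R t)ᵀ * R t * ((R t)ᵀ * R t - 1) + ((R t)ᵀ * R t - 1) * ((R t)ᵀ * R t)))
        = -(2 * k) * Matrix.trace (M * (P * M + M * P)) := rfl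
    rw [hgoal, htr2, hsplit]
    nlinarith
end

section
/- Consider $e=(e_1,e_2)\in\mathbb{R}^3\times\mathbb{R}^3$ with dynamics $\dot e = (A(t)-L(t)C)e$ where $A(t)=\begin{pmatrix}-\hat\Omega_0(t)&I\\0&\mathbb{I}^{-1}(\widehat{\mathbb{I}\Omega_0(t)}-\hat\Omega_0(t)\mathbb{I})\end{pmatrix}$, $C=(I\ 0)$, and $L(t)=(L_1(t);L_2(t))$ with $L_1(t)=-\hat\Omega_0(t)+\mathbb{I}^{-1}(\widehat{\mathbb{I}\Omega_0(t)}-\hat\Omega_0(t)\mathbb{I})+M_1$ and $L_2(t)=-(\hat{\dot\Omega}_0(t)+\dot L_1(t))+(\hat\Omega_0(t)+L_1(t))^2-M_1(\hat\Omega_0(t)+L_1(t))+M_2$, where $M_1,M_2$ are constant symmetric positive-definite $3\times3$ matrices and $\Omega_0$ is $C^1$ with $\Omega_0,\dot\Omega_0$ bounded. Then the origin is uniformly exponentially stable for this system. -/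
open Matrix

/-- The non-Kalman observer gain block `L₁(t)`. -/
noncomputable def L1 (J M₁ : Matrix (Fin 3) (Fin 3) ℝ) (Ω₀ : ℝ → Fin 3 → ℝ) (t : ℝ) :
    Matrix (Fin 3) (Fin 3) ℝ :=
  -hat (Ω₀ t) + J⁻¹ * (hat (J.mulVec (Ω₀ t)) - hat (Ω₀ t) * J) + M₁

/-- The derivative of `L₁(t)` (expressed through the derivative `dΩ` of `Ω₀`). -/
noncomputable def dL1 (J : Matrix (Fin 3) (Fin 3) ℝ) (dΩ : ℝ → Fin 3 → ℝ) (t : ℝ) :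
    Matrix (Fin 3) (Fin 3) ℝ :=
  -hat (dΩ t) + J⁻¹ * (hat (J.mulVec (dΩ t)) - hat (dΩ t) * J)

/-- The non-Kalman observer gain block `L₂(t)`. -/
noncomputable def L2 (J M₁ M₂ : Matrix (Fin 3) (Fin 3) ℝ) (Ω₀ dΩ : ℝ → Fin 3 → ℝ) (t : ℝ) :
    Matrix (Fin 3) (Fin 3) ℝ :=
  -(hat (dΩ t) + dL1 J dΩ t) + (hat (Ω₀ t) + L1 J M₁ Ω₀ t) ^ 2
    - M₁ * (hat (Ω₀ t) + L1 J M₁ Ω₀ t) + M₂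



lemma hasDerivAt_const_mulVec (A : Matrix (Fin 3) (Fin 3) ℝ) {f : ℝ → Fin 3 → ℝ}
    {f' : Fin 3 → ℝ} {t : ℝ} (hf : HasDerivAt f f' t) :
    HasDerivAt (fun s => A.mulVec (f s)) (A.mulVec f') t := by
  have := (LinearMap.toContinuousLinearMap A.mulVecLin).hasFDerivAt (x := f t)
  exact this.comp_hasDerivAt t hf

lemma hasDerivAt_dotProduct {f g : ℝ → Fin 3 → ℝ} {f' g' : Fin 3 → ℝ} {t : ℝ}
    (hf : HasDerivAt f f' t) (hg : HasDerivAt g g' t) :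
    HasDerivAt (fun s => f s ⬝ᵥ g s) (f' ⬝ᵥ g t + f t ⬝ᵥ g') t := by
  have F := hasDerivAt_pi.1 hf
  have G := hasDerivAt_pi.1 hg
  have H := (((F 0).mul (G 0)).add ((F 1).mul (G 1))).add ((F 2).mul (G 2))
  simp only [dotProduct, Fin.sum_univ_three]
  exact H.congr_deriv (by ring)

lemma hasDerivAt_hat_mulVec {f g : ℝ → Fin 3 → ℝ} {f' g' : Fin 3 → ℝ} {t : ℝ}
    (hf : HasDerivAt f f' t) (hg : HasDerivAt g g' t) :
    HasDerivAt (fun s => (hat (f s)).mulVec (g s))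
      ((hat f').mulVec (g t) + (hat (f t)).mulVec g') t := by
  have F := hasDerivAt_pi.1 hf
  have G := hasDerivAt_pi.1 hg
  rw [hasDerivAt_pi]
  intro i
  fin_cases i
  · convert ((F 1).mul (G 2)).sub ((F 2).mul (G 1)) using 1 <;>
      first
        | (funext s; simp [hat, Matrix.mulVec, dotProduct, Fin.sum_univ_three, Matrix.vecHead, Matrix.vecTail]; ring)
        | (simp [hat, Matrix.mulVec, dotProduct, Fin.sum_univ_three, Matrix.vecHead, Matrix.vecTail]; ring)
  · convert ((F 2).mul (G 0)).sub ((F 0).mul (G 2)) using 1 <;>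
      first
        | (funext s; simp [hat, Matrix.mulVec, dotProduct, Fin.sum_univ_three, Matrix.vecHead, Matrix.vecTail]; ring)
        | (simp [hat, Matrix.mulVec, dotProduct, Fin.sum_univ_three, Matrix.vecHead, Matrix.vecTail]; ring)
  · convert ((F 0).mul (G 1)).sub ((F 1).mul (G 0)) using 1 <;>
      first
        | (funext s; simp [hat, Matrix.mulVec, dotProduct, Fin.sum_univ_three, Matrix.vecHead, Matrix.vecTail]; ring)
        | (simp [hat, Matrix.mulVec, dotProduct, Fin.sum_univ_three, Matrix.vecHead, Matrix.vecTail]; ring)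

lemma dot_self_nonneg' (x : Fin 3 → ℝ) : 0 ≤ x ⬝ᵥ x := by
  simp only [dotProduct, Fin.sum_univ_three]; nlinarith [sq_nonneg (x 0), sq_nonneg (x 1), sq_nonneg (x 2)]

lemma sq_le_dot (x : Fin 3 → ℝ) (i : Fin 3) : x i * x i ≤ x ⬝ᵥ x := by
  simpa [dotProduct] using
    Finset.single_le_sum (f := fun j => x j * x j) (fun j _ => mul_self_nonneg (x j))
      (Finset.mem_univ i)

lemma norm_sq_le_dot (x : Fin 3 → ℝ) : ‖x‖ * ‖x‖ ≤ x ⬝ᵥ x := by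
  have h : ‖x‖ ≤ Real.sqrt (x ⬝ᵥ x) := by
    rw [pi_norm_le_iff_of_nonneg (Real.sqrt_nonneg _)]
    intro i
    rw [Real.norm_eq_abs, ← Real.sqrt_mul_self_eq_abs]
    exact Real.sqrt_le_sqrt (sq_le_dot x i)
  calc ‖x‖ * ‖x‖ ≤ Real.sqrt (x ⬝ᵥ x) * Real.sqrt (x ⬝ᵥ x) :=
        mul_le_mul h h (norm_nonneg _) (Real.sqrt_nonneg _)
    _ = x ⬝ᵥ x := Real.mul_self_sqrt (dot_self_nonneg' x)

lemma dot_le_three_norm (x : Fin 3 → ℝ) : x ⬝ᵥ x ≤ 3 * (‖x‖ * ‖x‖) := by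
  have h : ∀ i, |x i| ≤ ‖x‖ := fun i => by
    simpa [Real.norm_eq_abs] using norm_le_pi_norm x i
  simp only [dotProduct, Fin.sum_univ_three]
  nlinarith [h 0, h 1, h 2, abs_nonneg (x 0), abs_nonneg (x 1), abs_nonneg (x 2),
    sq_abs (x 0), sq_abs (x 1), sq_abs (x 2), norm_nonneg x]

lemma abs_dot_le_half (x y : Fin 3 → ℝ) : |x ⬝ᵥ y| ≤ (x ⬝ᵥ x + y ⬝ᵥ y) / 2 := by
  simp only [dotProduct, Fin.sum_univ_three]
  rw [abs_le]
  constructor <;> nlinarith [sq_nonneg (x 0 + y 0), sq_nonneg (x 1 + y 1), sq_nonneg (x 2 + y 2),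
    sq_nonneg (x 0 - y 0), sq_nonneg (x 1 - y 1), sq_nonneg (x 2 - y 2)]

/-- entry-sum bound constant -/
noncomputable def entrySum (A : Matrix (Fin 3) (Fin 3) ℝ) : ℝ :=
  ∑ i, ∑ j, |A i j|

lemma entrySum_nonneg (A : Matrix (Fin 3) (Fin 3) ℝ) : 0 ≤ entrySum A := by
  apply Finset.sum_nonneg; intro i _; apply Finset.sum_nonneg; intro j _; exact abs_nonneg _

lemma abs_dot_mulVec_le (A : Matrix (Fin 3) (Fin 3) ℝ) (x y : Fin 3 → ℝ) :
    |x ⬝ᵥ A.mulVec y| ≤ entrySum A * ‖x‖ * ‖y‖ := by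
  have hx : ∀ i, |x i| ≤ ‖x‖ := fun i => by
    simpa [Real.norm_eq_abs] using norm_le_pi_norm x i
  have hy : ∀ i, |y i| ≤ ‖y‖ := fun i => by
    simpa [Real.norm_eq_abs] using norm_le_pi_norm y i
  calc |x ⬝ᵥ A.mulVec y| ≤ ∑ i, |x i * (A.mulVec y) i| :=
        Finset.abs_sum_le_sum_abs _ _
    _ ≤ ∑ i, ∑ j, |A i j| * (‖x‖ * ‖y‖) := by
        apply Finset.sum_le_sum
        intro i _
        rw [abs_mul]
        calc |x i| * |(A.mulVec y) i| ≤ ‖x‖ * ∑ j, |A i j| * ‖y‖ := by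
              apply mul_le_mul (hx i) ?_ (abs_nonneg _) (norm_nonneg _)
              have hrw : (A.mulVec y) i = ∑ j, A i j * y j := by
                simp [Matrix.mulVec, dotProduct]
              rw [hrw]
              calc |∑ j, A i j * y j| ≤ ∑ j, |A i j * y j| :=
                    Finset.abs_sum_le_sum_abs _ _
                _ ≤ ∑ j, |A i j| * ‖y‖ := by
                    apply Finset.sum_le_sum; intro j _
                    rw [abs_mul]
                    exact mul_le_mul_of_nonneg_left (hy j) (abs_nonneg _)
          _ = ∑ j, |A i j| * (‖x‖ * ‖y‖) := by rw [Finset.mul_sum]; congr 1; funext j; ring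
    _ = entrySum A * ‖x‖ * ‖y‖ := by
        rw [entrySum, Finset.sum_mul, Finset.sum_mul]
        congr 1; funext i; rw [Finset.sum_mul, Finset.sum_mul]; congr 1; funext j; ring


lemma norm_mulVec_le (A : Matrix (Fin 3) (Fin 3) ℝ) (x : Fin 3 → ℝ) :
    ‖A.mulVec x‖ ≤ entrySum A * ‖x‖ := by
  have hx : ∀ i, |x i| ≤ ‖x‖ := fun i => by
    simpa [Real.norm_eq_abs] using norm_le_pi_norm x i
  rw [pi_norm_le_iff_of_nonneg (mul_nonneg (entrySum_nonneg A) (norm_nonneg x))]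
  intro i
  have hrw : (A.mulVec x) i = ∑ j, A i j * x j := by
    simp [Matrix.mulVec, dotProduct]
  rw [Real.norm_eq_abs, hrw]
  calc |∑ j, A i j * x j| ≤ ∑ j, |A i j * x j| := Finset.abs_sum_le_sum_abs _ _
    _ ≤ ∑ j, |A i j| * ‖x‖ := by
        apply Finset.sum_le_sum; intro j _; rw [abs_mul]
        exact mul_le_mul_of_nonneg_left (hx j) (abs_nonneg _)
    _ = (∑ j, |A i j|) * ‖x‖ := by rw [Finset.sum_mul]
    _ ≤ entrySum A * ‖x‖ := by
        apply mul_le_mul_of_nonneg_right ?_ (norm_nonneg _)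
        exact Finset.single_le_sum (f := fun i => ∑ j, |A i j|)
          (fun i _ => Finset.sum_nonneg fun j _ => abs_nonneg _) (Finset.mem_univ i)

lemma norm_hat_mulVec_le (a b : Fin 3 → ℝ) : ‖(hat a).mulVec b‖ ≤ 6 * ‖a‖ * ‖b‖ := by
  have ha : ∀ i, |a i| ≤ ‖a‖ := fun i => by
    simpa [Real.norm_eq_abs] using norm_le_pi_norm a i
  calc ‖(hat a).mulVec b‖ ≤ entrySum (hat a) * ‖b‖ := norm_mulVec_le _ _
    _ ≤ 6 * ‖a‖ * ‖b‖ := by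
        apply mul_le_mul_of_nonneg_right ?_ (norm_nonneg b)
        have : entrySum (hat a) = |a 2| + |a 1| + (|a 2| + |a 0|) + (|a 1| + |a 0|) := by
          simp [entrySum, hat, Fin.sum_univ_three, Fin.sum_univ_succ]
          ring
        rw [this]
        have h0 := ha 0; have h1 := ha 1; have h2 := ha 2
        linarith
lemma dot_mulVec_symm {A : Matrix (Fin 3) (Fin 3) ℝ} (hA : Aᵀ = A) (x y : Fin 3 → ℝ) :
    x ⬝ᵥ A.mulVec y = y ⬝ᵥ A.mulVec x := by
  rw [Matrix.dotProduct_mulVec, ← Matrix.mulVec_transpose, hA, dotProduct_comm]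

lemma posdef_lower {M : Matrix (Fin 3) (Fin 3) ℝ} (hM : M.PosDef) :
    ∃ μ : ℝ, 0 < μ ∧ ∀ x : Fin 3 → ℝ, μ * (x ⬝ᵥ x) ≤ x ⬝ᵥ M.mulVec x := by
  have hpos : ∀ x : Fin 3 → ℝ, x ≠ 0 → 0 < x ⬝ᵥ M.mulVec x := by
    intro x hx
    have := hM.dotProduct_mulVec_pos hx
    simpa using this
  have hcont : Continuous fun x : Fin 3 → ℝ => x ⬝ᵥ M.mulVec x := by
    simp only [dotProduct, Matrix.mulVec]
    apply continuous_finset_sum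
    intro i _
    exact (continuous_apply i).mul
      (continuous_finset_sum _ fun j _ => continuous_const.mul (continuous_apply j))
  have hne : (Metric.sphere (0 : Fin 3 → ℝ) 1).Nonempty :=
    NormedSpace.sphere_nonempty.mpr zero_le_one
  obtain ⟨z, hz, hmin⟩ := (isCompact_sphere (0 : Fin 3 → ℝ) 1).exists_isMinOn hne
    hcont.continuousOn
  have hz1 : ‖z‖ = 1 := by simpa using hz
  have hzne : z ≠ 0 := by intro h; rw [h] at hz1; simp at hz1
  set μ' := z ⬝ᵥ M.mulVec z with hμ'
  have hμ'pos : 0 < μ' := hpos z hzne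
  refine ⟨μ' / 3, by positivity, ?_⟩
  intro x
  by_cases hx : x = 0
  · simp [hx]
  · have hnx : 0 < ‖x‖ := norm_pos_iff.mpr hx
    set u := ‖x‖⁻¹ • x with hu
    have hun : ‖u‖ = 1 := by
      rw [hu, norm_smul, norm_inv, norm_norm, inv_mul_cancel₀ hnx.ne']
    have huS : u ∈ Metric.sphere (0 : Fin 3 → ℝ) 1 := by simpa using hun
    have hxu : x = ‖x‖ • u := by
      rw [hu, smul_smul, mul_inv_cancel₀ hnx.ne', one_smul]
    have hgen : ∀ (c : ℝ) (v : Fin 3 → ℝ),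
        (c • v) ⬝ᵥ M.mulVec (c • v) = (c * c) * (v ⬝ᵥ M.mulVec v) := by
      intro c v
      rw [Matrix.mulVec_smul, smul_dotProduct, dotProduct_smul,
        smul_eq_mul, smul_eq_mul]
      ring
    have hscale : x ⬝ᵥ M.mulVec x = (‖x‖ * ‖x‖) * (u ⬝ᵥ M.mulVec u) := by
      calc x ⬝ᵥ M.mulVec x = (‖x‖ • u) ⬝ᵥ M.mulVec (‖x‖ • u) := by rw [← hxu]
        _ = (‖x‖ * ‖x‖) * (u ⬝ᵥ M.mulVec u) := hgen _ _
    have hmin' : μ' ≤ u ⬝ᵥ M.mulVec u := hmin huS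
    have h3 : x ⬝ᵥ x ≤ 3 * (‖x‖ * ‖x‖) := dot_le_three_norm x
    have : (μ' / 3) * (x ⬝ᵥ x) ≤ (μ' / 3) * (3 * (‖x‖ * ‖x‖)) :=
      mul_le_mul_of_nonneg_left h3 (by positivity)
    calc (μ' / 3) * (x ⬝ᵥ x) ≤ μ' * (‖x‖ * ‖x‖) := by linarith
      _ ≤ (‖x‖ * ‖x‖) * (u ⬝ᵥ M.mulVec u) := by nlinarith
      _ = x ⬝ᵥ M.mulVec x := hscale.symm

lemma gronwall_exp {V Vd : ℝ → ℝ} {lam : ℝ}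
    (hV : ∀ t, HasDerivAt V (Vd t) t) (hle : ∀ t, Vd t ≤ -lam * V t) :
    ∀ s t : ℝ, s ≤ t → V t ≤ V s * Real.exp (-lam * (t - s)) := by
  intro s t hst
  set g := fun τ => V τ * Real.exp (lam * τ) with hg
  have hg' : ∀ τ, HasDerivAt g ((Vd τ + lam * V τ) * Real.exp (lam * τ)) τ := by
    intro τ
    have he : HasDerivAt (fun τ => Real.exp (lam * τ)) (lam * Real.exp (lam * τ)) τ := by
      have := (Real.hasDerivAt_exp (lam * τ)).comp τ ((hasDerivAt_id τ).const_mul lam)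
      simpa [mul_comm, Function.comp_def] using this
    have := (hV τ).mul he
    exact this.congr_deriv (by ring)
  have hanti : Antitone g := by
    apply antitone_of_deriv_nonpos
    · intro τ; exact (hg' τ).differentiableAt
    · intro τ
      rw [(hg' τ).deriv]
      have h1 : Vd τ + lam * V τ ≤ 0 := by have := hle τ; linarith
      have h2 : (0:ℝ) < Real.exp (lam * τ) := Real.exp_pos _
      nlinarith
  have hgle : g t ≤ g s := hanti hst
  have h2 : V t * Real.exp (lam * t) * Real.exp (-(lam * t)) ≤
      V s * Real.exp (lam * s) * Real.exp (-(lam * t)) :=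
    mul_le_mul_of_nonneg_right hgle (Real.exp_nonneg _)
  rw [mul_assoc, mul_assoc, ← Real.exp_add, ← Real.exp_add] at h2
  simp only [add_neg_cancel, Real.exp_zero, mul_one] at h2
  calc V t ≤ V s * Real.exp (lam * s + -(lam * t)) := h2
    _ = V s * Real.exp (-lam * (t - s)) := by ring_nf

lemma id1 (Ji Jm M₁ Ha HJa : Matrix (Fin 3) (Fin 3) ℝ) (x y : Fin 3 → ℝ) :
    (-Ha - (-Ha + Ji * (HJa - Ha * Jm) + M₁)).mulVec x + y
    = y - (Ji.mulVec (HJa.mulVec x) - Ji.mulVec (Ha.mulVec (Jm.mulVec x)) + M₁.mulVec x) := by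
  funext i
  fin_cases i <;>
  · simp [Matrix.mulVec, dotProduct, Matrix.mul_apply, Fin.sum_univ_three,
      Matrix.sub_apply, Matrix.add_apply, Matrix.neg_apply]
    ring

set_option maxHeartbeats 1000000 in
lemma id2 (Ji Jm M₁ M₂ Ha Hd HJa HJd : Matrix (Fin 3) (Fin 3) ℝ) (x y E : Fin 3 → ℝ)
    (hE : E = (-Ha - (-Ha + Ji * (HJa - Ha * Jm) + M₁)).mulVec x + y) :
    (Ji * (HJa - Ha * Jm)).mulVec y
      - (-(Hd + (-Hd + Ji * (HJd - Hd * Jm))) + (Ha + (-Ha + Ji * (HJa - Ha * Jm) + M₁)) ^ 2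
          - M₁ * (Ha + (-Ha + Ji * (HJa - Ha * Jm) + M₁)) + M₂).mulVec x
      - (Ji.mulVec (HJd.mulVec x + HJa.mulVec E)
          - Ji.mulVec (Hd.mulVec (Jm.mulVec x) + Ha.mulVec (Jm.mulVec E)) + M₁.mulVec E)
    = -(M₁.mulVec (y - (Ji.mulVec (HJa.mulVec x) - Ji.mulVec (Ha.mulVec (Jm.mulVec x))
          + M₁.mulVec x))) - M₂.mulVec x := by
  subst hE
  simp only [pow_two, Matrix.sub_mulVec, Matrix.add_mulVec, Matrix.neg_mulVec,
    Matrix.mulVec_add, Matrix.mulVec_sub, Matrix.mulVec_neg, Matrix.mulVec_mulVec,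
    Matrix.mul_sub, Matrix.sub_mul, Matrix.mul_add, Matrix.add_mul, Matrix.neg_mul,
    Matrix.mul_neg, neg_neg, mul_assoc]
  abel

noncomputable def wfun (J M₁ : Matrix (Fin 3) (Fin 3) ℝ) (Ω₀ e₁ e₂ : ℝ → Fin 3 → ℝ) :
    ℝ → Fin 3 → ℝ := fun τ =>
  e₂ τ - (J⁻¹.mulVec ((hat (J.mulVec (Ω₀ τ))).mulVec (e₁ τ))
    - J⁻¹.mulVec ((hat (Ω₀ τ)).mulVec (J.mulVec (e₁ τ))) + M₁.mulVec (e₁ τ))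

lemma e1_deriv (J M₁ : Matrix (Fin 3) (Fin 3) ℝ) (Ω₀ e₁ e₂ : ℝ → Fin 3 → ℝ)
    (h1 : ∀ t, HasDerivAt e₁ ((-hat (Ω₀ t) - L1 J M₁ Ω₀ t).mulVec (e₁ t) + e₂ t) t) :
    ∀ τ, HasDerivAt e₁ (wfun J M₁ Ω₀ e₁ e₂ τ) τ := by
  intro τ
  have h := h1 τ
  have heq : (-hat (Ω₀ τ) - L1 J M₁ Ω₀ τ).mulVec (e₁ τ) + e₂ τ = wfun J M₁ Ω₀ e₁ e₂ τ := by
    simp only [L1, wfun]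
    exact id1 J⁻¹ J M₁ (hat (Ω₀ τ)) (hat (J.mulVec (Ω₀ τ))) (e₁ τ) (e₂ τ)
  rwa [heq] at h

lemma w_deriv (J M₁ M₂ : Matrix (Fin 3) (Fin 3) ℝ) (Ω₀ dΩ e₁ e₂ : ℝ → Fin 3 → ℝ)
    (hderiv : ∀ t, HasDerivAt Ω₀ (dΩ t) t)
    (h1 : ∀ t, HasDerivAt e₁ ((-hat (Ω₀ t) - L1 J M₁ Ω₀ t).mulVec (e₁ t) + e₂ t) t)
    (h2 : ∀ t, HasDerivAt e₂
      ((J⁻¹ * (hat (J.mulVec (Ω₀ t)) - hat (Ω₀ t) * J)).mulVec (e₂ t)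
        - (L2 J M₁ M₂ Ω₀ dΩ t).mulVec (e₁ t)) t) :
    ∀ τ, HasDerivAt (wfun J M₁ Ω₀ e₁ e₂)
      (-(M₁.mulVec (wfun J M₁ Ω₀ e₁ e₂ τ)) - M₂.mulVec (e₁ τ)) τ := by
  intro τ
  have hu' : HasDerivAt
      (fun s => J⁻¹.mulVec ((hat (J.mulVec (Ω₀ s))).mulVec (e₁ s))
        - J⁻¹.mulVec ((hat (Ω₀ s)).mulVec (J.mulVec (e₁ s))) + M₁.mulVec (e₁ s))
      (J⁻¹.mulVec ((hat (J.mulVec (dΩ τ))).mulVec (e₁ τ)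
          + (hat (J.mulVec (Ω₀ τ))).mulVec ((-hat (Ω₀ τ) - L1 J M₁ Ω₀ τ).mulVec (e₁ τ) + e₂ τ))
        - J⁻¹.mulVec ((hat (dΩ τ)).mulVec (J.mulVec (e₁ τ))
          + (hat (Ω₀ τ)).mulVec (J.mulVec ((-hat (Ω₀ τ) - L1 J M₁ Ω₀ τ).mulVec (e₁ τ) + e₂ τ)))
        + M₁.mulVec ((-hat (Ω₀ τ) - L1 J M₁ Ω₀ τ).mulVec (e₁ τ) + e₂ τ)) τ :=
    ((hasDerivAt_const_mulVec J⁻¹ (hasDerivAt_hat_mulVec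
        (hasDerivAt_const_mulVec J (hderiv τ)) (h1 τ))).sub
      (hasDerivAt_const_mulVec J⁻¹ (hasDerivAt_hat_mulVec (hderiv τ)
        (hasDerivAt_const_mulVec J (h1 τ))))).add (hasDerivAt_const_mulVec M₁ (h1 τ))
  have hd := (h2 τ).sub hu'
  simp only [L2, dL1, L1] at hd
  have hkey := id2 J⁻¹ J M₁ M₂ (hat (Ω₀ τ)) (hat (dΩ τ)) (hat (J.mulVec (Ω₀ τ)))
    (hat (J.mulVec (dΩ τ))) (e₁ τ) (e₂ τ)
    ((-hat (Ω₀ τ) - (-hat (Ω₀ τ) + J⁻¹ * (hat (J.mulVec (Ω₀ τ)) - hat (Ω₀ τ) * J)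
        + M₁)).mulVec (e₁ τ) + e₂ τ) rfl
  rw [hkey] at hd
  have hfun : (fun s => e₂ s - (J⁻¹.mulVec ((hat (J.mulVec (Ω₀ s))).mulVec (e₁ s))
      - J⁻¹.mulVec ((hat (Ω₀ s)).mulVec (J.mulVec (e₁ s))) + M₁.mulVec (e₁ s)))
      = wfun J M₁ Ω₀ e₁ e₂ := by
    funext s; simp only [wfun]
  rw [show (e₂ - fun s => J⁻¹.mulVec ((hat (J.mulVec (Ω₀ s))).mulVec (e₁ s))
      - J⁻¹.mulVec ((hat (Ω₀ s)).mulVec (J.mulVec (e₁ s))) + M₁.mulVec (e₁ s))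
      = wfun J M₁ Ω₀ e₁ e₂ from hfun] at hd
  simp only [wfun]
  exact hd

lemma u_norm_le (J M₁ : Matrix (Fin 3) (Fin 3) ℝ) (Ω₀ : ℝ → Fin 3 → ℝ) (cΩ : ℝ)
    (hcΩ : ∀ τ, ‖Ω₀ τ‖ ≤ cΩ) (τ : ℝ) (x : Fin 3 → ℝ) :
    ‖J⁻¹.mulVec ((hat (J.mulVec (Ω₀ τ))).mulVec x)
      - J⁻¹.mulVec ((hat (Ω₀ τ)).mulVec (J.mulVec x)) + M₁.mulVec x‖
    ≤ (12 * entrySum J⁻¹ * entrySum J * cΩ + entrySum M₁) * ‖x‖ := by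
  have hcΩ0 : 0 ≤ cΩ := (norm_nonneg _).trans (hcΩ τ)
  have hJ0 := entrySum_nonneg J
  have hJi0 := entrySum_nonneg J⁻¹
  have hM0 := entrySum_nonneg M₁
  have t1 : ‖J⁻¹.mulVec ((hat (J.mulVec (Ω₀ τ))).mulVec x)‖
      ≤ entrySum J⁻¹ * (6 * (entrySum J * cΩ) * ‖x‖) := by
    refine (norm_mulVec_le _ _).trans (mul_le_mul_of_nonneg_left ?_ hJi0)
    refine (norm_hat_mulVec_le _ _).trans ?_
    have hJa : ‖J.mulVec (Ω₀ τ)‖ ≤ entrySum J * cΩ :=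
      (norm_mulVec_le _ _).trans (mul_le_mul_of_nonneg_left (hcΩ τ) hJ0)
    have := mul_le_mul_of_nonneg_right hJa (norm_nonneg x)
    nlinarith [norm_nonneg x]
  have t2 : ‖J⁻¹.mulVec ((hat (Ω₀ τ)).mulVec (J.mulVec x))‖
      ≤ entrySum J⁻¹ * (6 * cΩ * (entrySum J * ‖x‖)) := by
    refine (norm_mulVec_le _ _).trans (mul_le_mul_of_nonneg_left ?_ hJi0)
    refine (norm_hat_mulVec_le _ _).trans ?_
    have hJx : ‖J.mulVec x‖ ≤ entrySum J * ‖x‖ := norm_mulVec_le _ _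
    have h1 := mul_le_mul_of_nonneg_right (hcΩ τ) (norm_nonneg (J.mulVec x))
    nlinarith [norm_nonneg (J.mulVec x), norm_nonneg x, hcΩ τ,
      mul_le_mul_of_nonneg_left hJx hcΩ0]
  have t3 : ‖M₁.mulVec x‖ ≤ entrySum M₁ * ‖x‖ := norm_mulVec_le _ _
  calc ‖J⁻¹.mulVec ((hat (J.mulVec (Ω₀ τ))).mulVec x)
        - J⁻¹.mulVec ((hat (Ω₀ τ)).mulVec (J.mulVec x)) + M₁.mulVec x‖
      ≤ ‖J⁻¹.mulVec ((hat (J.mulVec (Ω₀ τ))).mulVec x)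
          - J⁻¹.mulVec ((hat (Ω₀ τ)).mulVec (J.mulVec x))‖ + ‖M₁.mulVec x‖ := norm_add_le _ _
    _ ≤ (‖J⁻¹.mulVec ((hat (J.mulVec (Ω₀ τ))).mulVec x)‖
          + ‖J⁻¹.mulVec ((hat (Ω₀ τ)).mulVec (J.mulVec x))‖) + ‖M₁.mulVec x‖ := by
        have := norm_sub_le (J⁻¹.mulVec ((hat (J.mulVec (Ω₀ τ))).mulVec x))
          (J⁻¹.mulVec ((hat (Ω₀ τ)).mulVec (J.mulVec x)))
        linarith
    _ ≤ (12 * entrySum J⁻¹ * entrySum J * cΩ + entrySum M₁) * ‖x‖ := by nlinarith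

noncomputable def Vfun (M₂ : Matrix (Fin 3) (Fin 3) ℝ) (ε : ℝ) (x w : ℝ → Fin 3 → ℝ) :
    ℝ → ℝ := fun τ =>
  x τ ⬝ᵥ M₂.mulVec (x τ) + w τ ⬝ᵥ w τ + (2 * ε) * (x τ ⬝ᵥ w τ)

lemma Vfun_deriv (M₁ M₂ : Matrix (Fin 3) (Fin 3) ℝ) (ε : ℝ) (x w : ℝ → Fin 3 → ℝ)
    (hx : ∀ τ, HasDerivAt x (w τ) τ)
    (hw : ∀ τ, HasDerivAt w (-(M₁.mulVec (w τ)) - M₂.mulVec (x τ)) τ) :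
    ∀ τ, HasDerivAt (Vfun M₂ ε x w)
      (w τ ⬝ᵥ M₂.mulVec (x τ) + x τ ⬝ᵥ M₂.mulVec (w τ)
        + ((-(M₁.mulVec (w τ)) - M₂.mulVec (x τ)) ⬝ᵥ w τ
            + w τ ⬝ᵥ (-(M₁.mulVec (w τ)) - M₂.mulVec (x τ)))
        + (2 * ε) * (w τ ⬝ᵥ w τ + x τ ⬝ᵥ (-(M₁.mulVec (w τ)) - M₂.mulVec (x τ)))) τ := by
  intro τ
  have d1 := hasDerivAt_dotProduct (hx τ) (hasDerivAt_const_mulVec M₂ (hx τ))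
  have d2 := hasDerivAt_dotProduct (hw τ) (hw τ)
  have d3 := (hasDerivAt_dotProduct (hx τ) (hw τ)).const_mul (2 * ε)
  exact (d1.add d2).add d3

set_option maxHeartbeats 3000000 in
/-- With the non-Kalman observer gains `L₁, L₂` built from constant symmetric
positive-definite matrices `M₁, M₂`, the observation error dynamics
`ė = (A(t) - L(t)C)e`, i.e. `ė₁ = (-hat Ω₀ - L₁)e₁ + e₂`,
`ė₂ = 𝕀⁻¹(hat(𝕀Ω₀) - hat(Ω₀)𝕀)e₂ - L₂ e₁`, is uniformly exponentially stable. -/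
theorem stmt_19 (J : Matrix (Fin 3) (Fin 3) ℝ) (hJ : J.PosDef) (hJsym : Jᵀ = J)
    (M₁ M₂ : Matrix (Fin 3) (Fin 3) ℝ)
    (hM₁ : M₁.PosDef) (hM₁sym : M₁ᵀ = M₁) (hM₂ : M₂.PosDef) (hM₂sym : M₂ᵀ = M₂)
    (Ω₀ dΩ : ℝ → Fin 3 → ℝ) (hdΩcont : Continuous dΩ)
    (hderiv : ∀ t, HasDerivAt Ω₀ (dΩ t) t)
    (hΩbdd : ∃ c : ℝ, ∀ t, ‖Ω₀ t‖ ≤ c) (hdΩbdd : ∃ c : ℝ, ∀ t, ‖dΩ t‖ ≤ c) :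
    ∃ M lam : ℝ, 0 < M ∧ 0 < lam ∧
      ∀ e₁ e₂ : ℝ → Fin 3 → ℝ,
        (∀ t, HasDerivAt e₁
          ((-hat (Ω₀ t) - L1 J M₁ Ω₀ t).mulVec (e₁ t) + e₂ t) t) →
        (∀ t, HasDerivAt e₂
          ((J⁻¹ * (hat (J.mulVec (Ω₀ t)) - hat (Ω₀ t) * J)).mulVec (e₂ t)
            - (L2 J M₁ M₂ Ω₀ dΩ t).mulVec (e₁ t)) t) →
        ∀ s t, 0 ≤ s → s ≤ t →
          ‖e₁ t‖ + ‖e₂ t‖ ≤ M * Real.exp (-lam * (t - s)) * (‖e₁ s‖ + ‖e₂ s‖) := by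
  obtain ⟨μ₁, hμ₁, hμ₁le⟩ := posdef_lower hM₁
  obtain ⟨μ₂, hμ₂, hμ₂le⟩ := posdef_lower hM₂
  obtain ⟨c0, hc0⟩ := hΩbdd
  obtain ⟨cΩ, hcΩdef⟩ : ∃ x, x = max c0 0 := ⟨_, rfl⟩
  have hcΩ : ∀ τ, ‖Ω₀ τ‖ ≤ cΩ := by
    intro τ; rw [hcΩdef]; exact (hc0 τ).trans (le_max_left _ _)
  have hcΩ0 : (0:ℝ) ≤ cΩ := by rw [hcΩdef]; exact le_max_right _ _
  obtain ⟨c₁, hc₁def⟩ : ∃ x, x = entrySum M₁ + 1 := ⟨_, rfl⟩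
  have hc₁ : (0:ℝ) < c₁ := by have := entrySum_nonneg M₁; rw [hc₁def]; linarith
  obtain ⟨c₂, hc₂def⟩ : ∃ x, x = entrySum M₂ + 1 := ⟨_, rfl⟩
  have hc₂ : (0:ℝ) < c₂ := by have := entrySum_nonneg M₂; rw [hc₂def]; linarith
  obtain ⟨m, hmdef⟩ : ∃ x, x = min μ₂ 1 := ⟨_, rfl⟩
  have hm : 0 < m := by rw [hmdef]; exact lt_min hμ₂ one_pos
  have hm1 : m ≤ 1 := by rw [hmdef]; exact min_le_right _ _
  have hmμ₂ : m ≤ μ₂ := by rw [hmdef]; exact min_le_left _ _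
  have hden : (0:ℝ) < 2 + c₁^2/μ₂ := by
    have := div_nonneg (sq_nonneg c₁) hμ₂.le; linarith
  obtain ⟨ε, hεdef⟩ : ∃ x, x = min (μ₁ / (2 + c₁^2/μ₂)) (m/2) := ⟨_, rfl⟩
  have hε : 0 < ε := by rw [hεdef]; exact lt_min (div_pos hμ₁ hden) (half_pos hm)
  have hεA : ε * (2 + c₁^2/μ₂) ≤ μ₁ := by
    have h : ε ≤ μ₁ / (2 + c₁^2/μ₂) := by rw [hεdef]; exact min_le_left _ _
    calc ε * (2 + c₁^2/μ₂) ≤ (μ₁ / (2 + c₁^2/μ₂)) * (2 + c₁^2/μ₂) :=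
          mul_le_mul_of_nonneg_right h (le_of_lt hden)
      _ = μ₁ := div_mul_cancel₀ _ hden.ne'
  have hεB : ε ≤ m/2 := by rw [hεdef]; exact min_le_right _ _
  have hε1 : ε ≤ 1 := hεB.trans (by linarith)
  obtain ⟨κ, hκdef⟩ : ∃ x, x = min (ε*μ₂) μ₁ := ⟨_, rfl⟩
  have hκ : 0 < κ := by rw [hκdef]; exact lt_min (mul_pos hε hμ₂) hμ₁
  have hκ1 : κ ≤ ε*μ₂ := by rw [hκdef]; exact min_le_left _ _
  have hκ2 : κ ≤ μ₁ := by rw [hκdef]; exact min_le_right _ _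
  obtain ⟨C, hCdef⟩ : ∃ x, x = c₂ + 2 := ⟨_, rfl⟩
  have hC : (0:ℝ) < C := by rw [hCdef]; linarith
  obtain ⟨lam0, hlam0def⟩ : ∃ x, x = κ / C := ⟨_, rfl⟩
  have hlam0 : 0 < lam0 := by rw [hlam0def]; exact div_pos hκ hC
  obtain ⟨K, hKdef⟩ : ∃ x, x = 12 * entrySum J⁻¹ * entrySum J * cΩ + entrySum M₁ := ⟨_, rfl⟩
  have hK0 : 0 ≤ K := by
    have h1 := entrySum_nonneg J; have h2 := entrySum_nonneg J⁻¹
    have h3 := entrySum_nonneg M₁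
    have h4 := mul_nonneg (mul_nonneg (mul_nonneg (by norm_num : (0:ℝ) ≤ 12) h2) h1) hcΩ0
    rw [hKdef]; linarith
  have h1K : (0:ℝ) < 1 + K := by linarith
  have hsqrt3 : (0:ℝ) < Real.sqrt 3 := Real.sqrt_pos.mpr (by norm_num)
  have hsqrtCm : 0 < Real.sqrt (2*C/m) := Real.sqrt_pos.mpr (div_pos (by linarith) hm)
  refine ⟨(1+K) * 2 * Real.sqrt (2*C/m) * (Real.sqrt 3 * (1+K)), lam0/2,
    mul_pos (mul_pos (mul_pos h1K two_pos) hsqrtCm) (mul_pos hsqrt3 h1K),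
    by linarith, ?_⟩
  intro e₁ e₂ h1 h2 s t hs hst
  have hxd := e1_deriv J M₁ Ω₀ e₁ e₂ h1
  have hwd := w_deriv J M₁ M₂ Ω₀ dΩ e₁ e₂ hderiv h1 h2
  obtain ⟨w, hwdef⟩ : ∃ x, x = wfun J M₁ Ω₀ e₁ e₂ := ⟨_, rfl⟩
  rw [← hwdef] at hxd hwd
  have hVd := Vfun_deriv M₁ M₂ ε e₁ w hxd hwd
  have hq0 : ∀ v : Fin 3 → ℝ, 0 ≤ v ⬝ᵥ v := dot_self_nonneg'
  -- upper bound on dot with M₂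
  have b5 : ∀ x : Fin 3 → ℝ, x ⬝ᵥ M₂.mulVec x ≤ c₂ * (x ⬝ᵥ x) := by
    intro x
    have h := abs_dot_mulVec_le M₂ x x
    have h2 := norm_sq_le_dot x
    have h3 := le_abs_self (x ⬝ᵥ M₂.mulVec x)
    have h4 : entrySum M₂ ≤ c₂ := by rw [hc₂def]; linarith
    have f1 := mul_le_mul_of_nonneg_right h4 (mul_self_nonneg ‖x‖)
    have f2 := mul_le_mul_of_nonneg_left h2 hc₂.le
    linarith only [h, h3, f1, f2]
  -- V upper bound
  have hVup : ∀ τ, Vfun M₂ ε e₁ w τ ≤ C * (e₁ τ ⬝ᵥ e₁ τ + w τ ⬝ᵥ w τ) := by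
    intro τ
    have hb5 := b5 (e₁ τ)
    have b6 := abs_dot_le_half (e₁ τ) (w τ)
    have b7 : e₁ τ ⬝ᵥ w τ ≤ (e₁ τ ⬝ᵥ e₁ τ + w τ ⬝ᵥ w τ)/2 :=
      (le_abs_self _).trans b6
    simp only [Vfun]
    have hC' : C = c₂ + 2 := hCdef
    rw [hC']
    have p1 := mul_le_mul_of_nonneg_left b7 (by linarith : (0:ℝ) ≤ 2*ε)
    have p2 := mul_nonneg (sub_nonneg.mpr hε1) (add_nonneg (hq0 (e₁ τ)) (hq0 (w τ)))
    linarith only [hb5, p1, p2, hq0 (e₁ τ), hq0 (w τ), mul_nonneg hc₂.le (hq0 (w τ))]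
  -- V lower bound
  have hVlow : ∀ τ, m/2 * (e₁ τ ⬝ᵥ e₁ τ + w τ ⬝ᵥ w τ) ≤ Vfun M₂ ε e₁ w τ := by
    intro τ
    have b2 := hμ₂le (e₁ τ)
    have b6 := abs_dot_le_half (e₁ τ) (w τ)
    have b8 : -((e₁ τ ⬝ᵥ e₁ τ + w τ ⬝ᵥ w τ)/2) ≤ e₁ τ ⬝ᵥ w τ := by
      have := neg_abs_le (e₁ τ ⬝ᵥ w τ); linarith
    simp only [Vfun]
    have p1 := mul_le_mul_of_nonneg_left b8 (by linarith : (0:ℝ) ≤ 2*ε)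
    have p2 := mul_nonneg (sub_nonneg.mpr hmμ₂) (hq0 (e₁ τ))
    have p3 := mul_nonneg (sub_nonneg.mpr hm1) (hq0 (w τ))
    have p4 := mul_nonneg (sub_nonneg.mpr hεB) (add_nonneg (hq0 (e₁ τ)) (hq0 (w τ)))
    linarith only [b2, p1, p2, p3, p4, hq0 (e₁ τ), hq0 (w τ)]
  -- decay of the derivative
  have hVdle : ∀ τ, (w τ ⬝ᵥ M₂.mulVec (e₁ τ) + e₁ τ ⬝ᵥ M₂.mulVec (w τ)
        + ((-(M₁.mulVec (w τ)) - M₂.mulVec (e₁ τ)) ⬝ᵥ w τ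
            + w τ ⬝ᵥ (-(M₁.mulVec (w τ)) - M₂.mulVec (e₁ τ)))
        + (2 * ε) * (w τ ⬝ᵥ w τ + e₁ τ ⬝ᵥ (-(M₁.mulVec (w τ)) - M₂.mulVec (e₁ τ))))
      ≤ -lam0 * Vfun M₂ ε e₁ w τ := by
    intro τ
    have e1r : (-(M₁.mulVec (w τ)) - M₂.mulVec (e₁ τ)) ⬝ᵥ w τ
        = -(w τ ⬝ᵥ M₁.mulVec (w τ)) - (w τ ⬝ᵥ M₂.mulVec (e₁ τ)) := by
      rw [sub_dotProduct, neg_dotProduct,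
        dotProduct_comm (M₁.mulVec (w τ)) (w τ),
        dotProduct_comm (M₂.mulVec (e₁ τ)) (w τ)]
    have e2r : w τ ⬝ᵥ (-(M₁.mulVec (w τ)) - M₂.mulVec (e₁ τ))
        = -(w τ ⬝ᵥ M₁.mulVec (w τ)) - (w τ ⬝ᵥ M₂.mulVec (e₁ τ)) := by
      rw [dotProduct_sub, dotProduct_neg]
    have e3r : e₁ τ ⬝ᵥ (-(M₁.mulVec (w τ)) - M₂.mulVec (e₁ τ))
        = -(e₁ τ ⬝ᵥ M₁.mulVec (w τ)) - (e₁ τ ⬝ᵥ M₂.mulVec (e₁ τ)) := by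
      rw [dotProduct_sub, dotProduct_neg]
    have e4r : e₁ τ ⬝ᵥ M₂.mulVec (w τ) = w τ ⬝ᵥ M₂.mulVec (e₁ τ) :=
      dot_mulVec_symm hM₂sym _ _
    rw [e1r, e2r, e3r, e4r]
    have b1 := hμ₁le (w τ)
    have b2 := hμ₂le (e₁ τ)
    have b4 : |e₁ τ ⬝ᵥ M₁.mulVec (w τ)| ≤ c₁ * ‖e₁ τ‖ * ‖w τ‖ := by
      refine (abs_dot_mulVec_le M₁ _ _).trans ?_
      have h4 : entrySum M₁ ≤ c₁ := by rw [hc₁def]; linarith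
      have f1 := mul_le_mul_of_nonneg_right h4
        (mul_nonneg (norm_nonneg (e₁ τ)) (norm_nonneg (w τ)))
      linarith only [f1]
    have h2μ : (0:ℝ) < 2*μ₂ := by linarith
    have am : c₁ * ‖e₁ τ‖ * ‖w τ‖
        ≤ μ₂/2 * (e₁ τ ⬝ᵥ e₁ τ) + c₁^2/(2*μ₂) * (w τ ⬝ᵥ w τ) := by
      have hn1 := norm_sq_le_dot (e₁ τ)
      have hn2 := norm_sq_le_dot (w τ)
      have base : c₁ * ‖e₁ τ‖ * ‖w τ‖
          ≤ μ₂/2 * (‖e₁ τ‖ * ‖e₁ τ‖) + c₁^2/(2*μ₂) * (‖w τ‖ * ‖w τ‖) := by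
        rw [← sub_nonneg]
        have expand : μ₂/2 * (‖e₁ τ‖ * ‖e₁ τ‖) + c₁^2/(2*μ₂) * (‖w τ‖ * ‖w τ‖)
            - c₁ * ‖e₁ τ‖ * ‖w τ‖ = (μ₂ * ‖e₁ τ‖ - c₁ * ‖w τ‖)^2 / (2*μ₂) := by
          field_simp
          ring
        rw [expand]
        exact div_nonneg (sq_nonneg _) h2μ.le
      have hq1 : μ₂/2 * (‖e₁ τ‖ * ‖e₁ τ‖) ≤ μ₂/2 * (e₁ τ ⬝ᵥ e₁ τ) :=
        mul_le_mul_of_nonneg_left hn1 (by linarith)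
      have hq2 : c₁^2/(2*μ₂) * (‖w τ‖ * ‖w τ‖) ≤ c₁^2/(2*μ₂) * (w τ ⬝ᵥ w τ) :=
        mul_le_mul_of_nonneg_left hn2 (div_nonneg (sq_nonneg _) h2μ.le)
      linarith
    have hD : -(e₁ τ ⬝ᵥ M₁.mulVec (w τ))
        ≤ μ₂/2 * (e₁ τ ⬝ᵥ e₁ τ) + c₁^2/(2*μ₂) * (w τ ⬝ᵥ w τ) := by
      have := neg_abs_le (e₁ τ ⬝ᵥ M₁.mulVec (w τ))
      linarith [b4, am]
    have hdiv : c₁^2/μ₂ = 2*(c₁^2/(2*μ₂)) := by field_simp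
    have step1 : w τ ⬝ᵥ M₂.mulVec (e₁ τ) + w τ ⬝ᵥ M₂.mulVec (e₁ τ)
        + (-(w τ ⬝ᵥ M₁.mulVec (w τ)) - (w τ ⬝ᵥ M₂.mulVec (e₁ τ))
            + (-(w τ ⬝ᵥ M₁.mulVec (w τ)) - (w τ ⬝ᵥ M₂.mulVec (e₁ τ))))
        + (2 * ε) * (w τ ⬝ᵥ w τ + (-(e₁ τ ⬝ᵥ M₁.mulVec (w τ)) - (e₁ τ ⬝ᵥ M₂.mulVec (e₁ τ))))
        ≤ -κ * (e₁ τ ⬝ᵥ e₁ τ + w τ ⬝ᵥ w τ) := by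
      have p1 := mul_le_mul_of_nonneg_left hD (by linarith : (0:ℝ) ≤ 2*ε)
      have p2 := mul_le_mul_of_nonneg_left b2 (by linarith : (0:ℝ) ≤ 2*ε)
      have p3 := mul_nonneg (sub_nonneg.mpr hεA) (hq0 (w τ))
      have p4 := mul_nonneg (sub_nonneg.mpr hκ1) (hq0 (e₁ τ))
      have p5 := mul_nonneg (sub_nonneg.mpr hκ2) (hq0 (w τ))
      have heq3 : ε * (c₁^2/μ₂ * (w τ ⬝ᵥ w τ)) = 2*(ε*(c₁^2/(2*μ₂) * (w τ ⬝ᵥ w τ))) := by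
        rw [hdiv]; ring
      linarith only [b1, p1, p2, p3, p4, p5, heq3]
    refine step1.trans ?_
    have hVupτ := hVup τ
    have hlC : lam0 * C = κ := by rw [hlam0def]; exact div_mul_cancel₀ _ hC.ne'
    have hmul := mul_le_mul_of_nonneg_left hVupτ hlam0.le
    have heq : lam0 * (C * (e₁ τ ⬝ᵥ e₁ τ + w τ ⬝ᵥ w τ))
        = κ * (e₁ τ ⬝ᵥ e₁ τ + w τ ⬝ᵥ w τ) := by
      calc lam0 * (C * (e₁ τ ⬝ᵥ e₁ τ + w τ ⬝ᵥ w τ))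
          = (lam0 * C) * (e₁ τ ⬝ᵥ e₁ τ + w τ ⬝ᵥ w τ) := by ring
        _ = _ := by rw [hlC]
    linarith only [hmul, heq]
  -- Gronwall
  have hgron := gronwall_exp hVd hVdle s t hst
  -- from V to Q
  have hQchain : e₁ t ⬝ᵥ e₁ t + w t ⬝ᵥ w t
      ≤ (2*C/m) * Real.exp (-lam0*(t-s)) * (e₁ s ⬝ᵥ e₁ s + w s ⬝ᵥ w s) := by
    have hlo := hVlow t
    have hup := hVup s
    have hexp : (0:ℝ) ≤ Real.exp (-lam0*(t-s)) := Real.exp_nonneg _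
    have h4 : Vfun M₂ ε e₁ w s * Real.exp (-lam0*(t-s))
        ≤ (C * (e₁ s ⬝ᵥ e₁ s + w s ⬝ᵥ w s)) * Real.exp (-lam0*(t-s)) :=
      mul_le_mul_of_nonneg_right hup hexp
    have key : (2*C/m) * Real.exp (-lam0*(t-s)) * (e₁ s ⬝ᵥ e₁ s + w s ⬝ᵥ w s)
        = (C * (e₁ s ⬝ᵥ e₁ s + w s ⬝ᵥ w s) * Real.exp (-lam0*(t-s))) * (2/m) := by
      field_simp
    have key2 : m/2 * (e₁ t ⬝ᵥ e₁ t + w t ⬝ᵥ w t) * (2/m) = e₁ t ⬝ᵥ e₁ t + w t ⬝ᵥ w t := by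
      field_simp
    rw [key]
    have := mul_le_mul_of_nonneg_right (hlo.trans (hgron.trans h4))
      (div_nonneg (by norm_num) hm.le : (0:ℝ) ≤ 2/m)
    calc e₁ t ⬝ᵥ e₁ t + w t ⬝ᵥ w t
        = m/2 * (e₁ t ⬝ᵥ e₁ t + w t ⬝ᵥ w t) * (2/m) := key2.symm
      _ ≤ (C * (e₁ s ⬝ᵥ e₁ s + w s ⬝ᵥ w s) * Real.exp (-lam0*(t-s))) * (2/m) := this
  -- norm comparisons at t
  have hsq1 : ‖e₁ t‖ ≤ Real.sqrt (e₁ t ⬝ᵥ e₁ t + w t ⬝ᵥ w t) := by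
    have ha := norm_sq_le_dot (e₁ t)
    have hb := hq0 (w t)
    calc ‖e₁ t‖ = Real.sqrt (‖e₁ t‖ * ‖e₁ t‖) := (Real.sqrt_mul_self (norm_nonneg _)).symm
      _ ≤ _ := Real.sqrt_le_sqrt (by linarith)
  have hsq2 : ‖w t‖ ≤ Real.sqrt (e₁ t ⬝ᵥ e₁ t + w t ⬝ᵥ w t) := by
    have ha := norm_sq_le_dot (w t)
    have hb := hq0 (e₁ t)
    calc ‖w t‖ = Real.sqrt (‖w t‖ * ‖w t‖) := (Real.sqrt_mul_self (norm_nonneg _)).symm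
      _ ≤ _ := Real.sqrt_le_sqrt (by linarith)
  have hQs3 : e₁ s ⬝ᵥ e₁ s + w s ⬝ᵥ w s ≤ 3*(‖e₁ s‖ + ‖w s‖)^2 := by
    have ha := dot_le_three_norm (e₁ s)
    have hb := dot_le_three_norm (w s)
    linarith only [ha, hb, mul_nonneg (norm_nonneg (e₁ s)) (norm_nonneg (w s))]
  -- relation between w and e₂
  have hKb : ∀ τ, ‖w τ - e₂ τ‖ ≤ K * ‖e₁ τ‖ := by
    intro τ
    have h := u_norm_le J M₁ Ω₀ cΩ hcΩ τ (e₁ τ)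
    rw [← hKdef] at h
    have heq : w τ - e₂ τ = -(J⁻¹.mulVec ((hat (J.mulVec (Ω₀ τ))).mulVec (e₁ τ))
        - J⁻¹.mulVec ((hat (Ω₀ τ)).mulVec (J.mulVec (e₁ τ))) + M₁.mulVec (e₁ τ)) := by
      simp only [hwdef, wfun]
      abel
    rw [heq, norm_neg]
    exact h
  have hw_le : ∀ τ, ‖w τ‖ ≤ ‖e₂ τ‖ + K * ‖e₁ τ‖ := by
    intro τ
    have h := hKb τ
    have habs := abs_norm_sub_norm_le (w τ) (e₂ τ)
    rw [abs_le] at habs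
    linarith [habs.2]
  have he2_le : ∀ τ, ‖e₂ τ‖ ≤ ‖w τ‖ + K * ‖e₁ τ‖ := by
    intro τ
    have h := hKb τ
    have habs := abs_norm_sub_norm_le (w τ) (e₂ τ)
    rw [abs_le] at habs
    linarith [habs.1]
  have hsb : ‖e₁ s‖ + ‖w s‖ ≤ (1+K) * (‖e₁ s‖ + ‖e₂ s‖) := by
    have h := hw_le s
    linarith only [h, mul_nonneg hK0 (norm_nonneg (e₂ s))]
  have htb : ‖e₁ t‖ + ‖e₂ t‖ ≤ (1+K) * (‖e₁ t‖ + ‖w t‖) := by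
    have h := he2_le t
    linarith only [h, mul_nonneg hK0 (norm_nonneg (w t))]
  -- the sqrt bound
  have hA : Real.sqrt (e₁ t ⬝ᵥ e₁ t + w t ⬝ᵥ w t)
      ≤ Real.sqrt (2*C/m) * Real.exp (-(lam0/2)*(t-s)) * (Real.sqrt 3 * (‖e₁ s‖ + ‖w s‖)) := by
    have hA0 : (0:ℝ) ≤ Real.sqrt (2*C/m) * Real.exp (-(lam0/2)*(t-s))
        * (Real.sqrt 3 * (‖e₁ s‖ + ‖w s‖)) := by
      have := add_nonneg (norm_nonneg (e₁ s)) (norm_nonneg (w s))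
      positivity
    have he : Real.exp (-(lam0/2)*(t-s)) ^ 2 = Real.exp (-lam0*(t-s)) := by
      rw [sq, ← Real.exp_add]; congr 1; ring
    have hs1 : Real.sqrt (2*C/m) ^ 2 = 2*C/m :=
      Real.sq_sqrt (div_nonneg (by linarith) hm.le)
    have hs3 : Real.sqrt 3 ^ 2 = (3:ℝ) := Real.sq_sqrt (by norm_num)
    have hA2 : (Real.sqrt (2*C/m) * Real.exp (-(lam0/2)*(t-s))
        * (Real.sqrt 3 * (‖e₁ s‖ + ‖w s‖)))^2
        = (2*C/m) * Real.exp (-lam0*(t-s)) * (3*(‖e₁ s‖ + ‖w s‖)^2) := by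
      calc (Real.sqrt (2*C/m) * Real.exp (-(lam0/2)*(t-s))
            * (Real.sqrt 3 * (‖e₁ s‖ + ‖w s‖)))^2
          = Real.sqrt (2*C/m)^2 * Real.exp (-(lam0/2)*(t-s))^2
            * (Real.sqrt 3^2 * (‖e₁ s‖ + ‖w s‖)^2) := by ring
        _ = (2*C/m) * Real.exp (-lam0*(t-s)) * (3*(‖e₁ s‖ + ‖w s‖)^2) := by
            rw [he, hs1, hs3]
    calc Real.sqrt (e₁ t ⬝ᵥ e₁ t + w t ⬝ᵥ w t)
        ≤ Real.sqrt ((Real.sqrt (2*C/m) * Real.exp (-(lam0/2)*(t-s))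
            * (Real.sqrt 3 * (‖e₁ s‖ + ‖w s‖)))^2) := by
          apply Real.sqrt_le_sqrt
          rw [hA2]
          refine hQchain.trans ?_
          have hcoef : (0:ℝ) ≤ (2*C/m) * Real.exp (-lam0*(t-s)) :=
            mul_nonneg (div_nonneg (by linarith) hm.le) (Real.exp_nonneg _)
          calc (2*C/m) * Real.exp (-lam0*(t-s)) * (e₁ s ⬝ᵥ e₁ s + w s ⬝ᵥ w s)
              ≤ (2*C/m) * Real.exp (-lam0*(t-s)) * (3*(‖e₁ s‖ + ‖w s‖)^2) :=
                mul_le_mul_of_nonneg_left hQs3 hcoef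
            _ = _ := by ring
      _ = _ := Real.sqrt_sq hA0
  -- final chain
  calc ‖e₁ t‖ + ‖e₂ t‖ ≤ (1+K) * (‖e₁ t‖ + ‖w t‖) := htb
    _ ≤ (1+K) * (2 * Real.sqrt (e₁ t ⬝ᵥ e₁ t + w t ⬝ᵥ w t)) :=
        mul_le_mul_of_nonneg_left (by linarith) h1K.le
    _ ≤ (1+K) * (2 * (Real.sqrt (2*C/m) * Real.exp (-(lam0/2)*(t-s))
          * (Real.sqrt 3 * ((1+K) * (‖e₁ s‖ + ‖e₂ s‖))))) := by
        refine mul_le_mul_of_nonneg_left ?_ h1K.le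
        refine mul_le_mul_of_nonneg_left ?_ (by norm_num)
        refine hA.trans ?_
        refine mul_le_mul_of_nonneg_left ?_ (by positivity)
        exact mul_le_mul_of_nonneg_left hsb (Real.sqrt_nonneg 3)
    _ = (1+K) * 2 * Real.sqrt (2*C/m) * (Real.sqrt 3 * (1+K))
          * Real.exp (-(lam0/2)*(t-s)) * (‖e₁ s‖ + ‖e₂ s‖) := by ring
end
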